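/- Let k ∈ {1,2} and let γ: (-2ε,2ε) → E be piecewise C^k (with corner at 0). Then for every δ ∈ (0,ε], the variable-scale mollification γ_δ is of class C^k on all of (-ε,ε). (In particular, for a continuous path that is piecewise C² the mollified path is C², and for a continuous path that is piecewise C¹ the mollified path is C¹.) -/

import Mathlib

open MeasureTheory Set
open scoped Convolution

/-- The variable mollification scale `σ_δ(t) = δ² σ(t/δ)`. -/
noncomputable def sigmaDel (σ : ℝ → ℝ) (δ t : ℝ) : ℝ := δ ^ 2 * σ (t / δ)

/-- The variable-scale mollification `γ_δ(s) = ∫ γ(s - σ_δ(s) t) φ(t) dt` (Bochner integral). -/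
noncomputable def mollify {E : Type*} [NormedAddCommGroup E] [NormedSpace ℝ E]
    (φ σ : ℝ → ℝ) (δ : ℝ) (γ : ℝ → E) (s : ℝ) : E :=
  ∫ t : ℝ, φ t • γ (s - sigmaDel σ δ s * t)

section Aux

variable {E : Type*} [NormedAddCommGroup E] [NormedSpace ℝ E] [CompleteSpace E]

/-- Affine change of variables in a mollification-type integral. -/
lemma integral_affine_smul (g : ℝ → ℝ) (f : ℝ → E) (s c : ℝ) (hc : 0 < c) :
    (∫ u : ℝ, (g ((s - u) / c) / c) • f u) = ∫ t : ℝ, g t • f (s - c * t) := by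
  set F : ℝ → E := fun u => (g ((s - u) / c) / c) • f u with hF
  have h1 : ∀ t : ℝ, g t • f (s - c * t) = c • F (s + (-c) * t) := by
    intro t
    have e1 : s + (-c) * t = s - c * t := by ring
    rw [e1]
    have e2 : (s - (s - c * t)) / c = t := by field_simp; ring
    show g t • f (s - c * t) = c • ((g ((s - (s - c * t)) / c) / c) • f (s - c * t))
    rw [e2, smul_smul]
    congr 1
    field_simp
  symm
  calc ∫ t : ℝ, g t • f (s - c * t)
      = ∫ t : ℝ, c • F (s + (-c) * t) := by simp_rw [h1]
    _ = c • ∫ t : ℝ, (fun x : ℝ => F (s + x)) ((-c) * t) := by rw [integral_smul]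
    _ = c • (|(-c)⁻¹| • ∫ x : ℝ, F (s + x)) := by
        rw [MeasureTheory.Measure.integral_comp_mul_left (fun x : ℝ => F (s + x)) (-c)]
    _ = c • (|(-c)⁻¹| • ∫ u : ℝ, F u) := by
        rw [MeasureTheory.integral_add_left_eq_self F s]
    _ = ∫ u : ℝ, F u := by
        rw [abs_inv, abs_neg, abs_of_pos hc, smul_smul, mul_inv_cancel₀ hc.ne', one_smul]

/-- Smoothness of the mollification on a region where the path is smooth. -/
lemma outer_aux (φ : ℝ → ℝ) (hφsm : ContDiff ℝ (⊤ : ℕ∞) φ)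
    (hφsupp : Function.support φ ⊆ Icc (-1) 1)
    (c : ℝ → ℝ) (hc : ContDiff ℝ (⊤ : ℕ∞) c) (k : ℕ)
    (γ : ℝ → E) (B J : Set ℝ) (hB : IsOpen B) (hJ : ContDiffOn ℝ k γ J)
    (hmaps : ∀ p ∈ B, ∀ x : ℝ, |x| ≤ 3/2 → p + c p * x ∈ J) :
    ContDiffOn ℝ k (fun s => ∫ t : ℝ, φ t • γ (s - c s * t)) B := by
  classical
  set χ : ContDiffBump (0 : ℝ) := ⟨1, 6/5, one_pos, by norm_num⟩ with hχ
  set g : ℝ → ℝ → E := fun p x => χ x • γ (p + c p * x) with hg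
  have hgs : ∀ p x, p ∈ B → x ∉ Metric.closedBall (0 : ℝ) (6/5) → g p x = 0 := by
    intro p x _ hx
    have hd : (6:ℝ)/5 ≤ dist x 0 := by
      by_contra h
      exact hx (Metric.mem_closedBall.2 (le_of_lt (not_le.1 h)))
    have : χ x = 0 := χ.zero_of_le_dist hd
    simp [hg, this]
  have hgsm : ContDiffOn ℝ k (Function.uncurry g) (B ×ˢ univ) := by
    apply contDiffOn_of_locally_contDiffOn
    rintro ⟨p, x⟩ hq
    by_cases hx : |x| < 3/2
    · refine ⟨{r : ℝ × ℝ | |r.2| < 3/2}, ?_, hx, ?_⟩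
      · have : {r : ℝ × ℝ | |r.2| < 3/2} = (fun r : ℝ × ℝ => |r.2|) ⁻¹' Iio (3/2) := rfl
        rw [this]
        exact (continuous_abs.comp continuous_snd).isOpen_preimage _ isOpen_Iio
      · have hχsm : ContDiffOn ℝ (k : ℕ∞) (fun r : ℝ × ℝ => χ r.2)
            ((B ×ˢ univ) ∩ {r : ℝ × ℝ | |r.2| < 3/2}) :=
          ((χ.contDiff (n := (k : ℕ∞))).comp contDiff_snd).contDiffOn
        have hm : ContDiffOn ℝ (k : ℕ∞) (fun r : ℝ × ℝ => r.1 + c r.1 * r.2)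
            ((B ×ˢ univ) ∩ {r : ℝ × ℝ | |r.2| < 3/2}) :=
          (contDiff_fst.add (((hc.of_le (mod_cast le_top)).comp contDiff_fst).mul contDiff_snd)).contDiffOn
        have hmapsTo : MapsTo (fun r : ℝ × ℝ => r.1 + c r.1 * r.2)
            ((B ×ˢ univ) ∩ {r : ℝ × ℝ | |r.2| < 3/2}) J := by
          rintro ⟨p', x'⟩ ⟨⟨hp', -⟩, hx'⟩
          exact hmaps p' hp' x' (le_of_lt hx')
        have : ContDiffOn ℝ (k : ℕ∞)
            (fun r : ℝ × ℝ => χ r.2 • γ (r.1 + c r.1 * r.2))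
            ((B ×ˢ univ) ∩ {r : ℝ × ℝ | |r.2| < 3/2}) :=
          hχsm.smul (hJ.comp hm hmapsTo)
        exact this
    · refine ⟨{r : ℝ × ℝ | 6/5 < |r.2|}, ?_, ?_, ?_⟩
      · have : {r : ℝ × ℝ | (6:ℝ)/5 < |r.2|} = (fun r : ℝ × ℝ => |r.2|) ⁻¹' Ioi (6/5) := rfl
        rw [this]
        exact (continuous_abs.comp continuous_snd).isOpen_preimage _ isOpen_Ioi
      · have : (3:ℝ)/2 ≤ |x| := not_lt.1 hx
        show (6:ℝ)/5 < |x|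
        linarith
      · apply (contDiffOn_const (c := (0:E))).congr
        rintro ⟨p', x'⟩ ⟨-, hx'⟩
        have hd : (6:ℝ)/5 ≤ dist x' 0 := by
          rw [Real.dist_eq, sub_zero]
          exact le_of_lt hx'
        have : χ x' = 0 := χ.zero_of_le_dist hd
        simp [Function.uncurry, hg, this]
  have hφloc : LocallyIntegrable φ volume := hφsm.continuous.locallyIntegrable
  have conv : ContDiffOn ℝ k
      (fun q : ℝ × ℝ => ((φ ⋆[ContinuousLinearMap.lsmul ℝ ℝ, volume] g q.1) q.2 : E))
      (B ×ˢ univ) :=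
    contDiffOn_convolution_right_with_param (ContinuousLinearMap.lsmul ℝ ℝ) hB
      (isCompact_closedBall 0 (6/5)) hgs hφloc hgsm
  have comp : ContDiffOn ℝ k
      (fun s : ℝ => ((φ ⋆[ContinuousLinearMap.lsmul ℝ ℝ, volume] g s) 0 : E)) B :=
    conv.comp (ContDiff.prodMk contDiff_id contDiff_const).contDiffOn (fun s hs => ⟨hs, mem_univ _⟩)
  refine comp.congr fun s hs => ?_
  rw [convolution_def]
  congr 1
  funext t
  simp only [ContinuousLinearMap.lsmul_apply]
  rcases eq_or_ne (φ t) 0 with h | h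
  · simp [h]
  · have ht : |t| ≤ 1 := by
      have := hφsupp (Function.mem_support.2 h)
      rw [mem_Icc] at this
      exact abs_le.2 this
    have hmem : -t ∈ Metric.closedBall (0 : ℝ) χ.rIn := by
      rw [Metric.mem_closedBall, Real.dist_eq, sub_zero, abs_neg]
      exact ht
    have hone : χ (-t) = 1 := χ.one_of_mem_closedBall hmem
    have : g s (0 - t) = γ (s - c s * t) := by
      rw [hg]
      simp only [zero_sub, hone, one_smul]
      congr 1
      ring
    rw [this]

end Aux

theorem mollify_contDiffOn
    {E : Type*} [NormedAddCommGroup E] [NormedSpace ℝ E] [CompleteSpace E]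
    (ε : ℝ) (hε0 : 0 < ε) (hε1 : ε ≤ 1)
    (φ σ : ℝ → ℝ)
    (hφsm : ContDiff ℝ (⊤ : ℕ∞) φ) (hφsupp : Function.support φ ⊆ Set.Icc (-1) 1)
    (hφ0 : ∀ t, 0 ≤ φ t) (hφ1 : ∀ t, φ t ≤ 1) (hφint : (∫ t : ℝ, φ t) = 1)
    (hσsm : ContDiff ℝ (⊤ : ℕ∞) σ) (hσsupp : Function.support σ ⊆ Set.Icc (-(1/2)) (1/2))
    (hσ0 : ∀ t, 0 ≤ σ t) (hσle : ∀ t, σ t ≤ 1/100)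
    (hσeq : ∀ t : ℝ, |t| ≤ 1/4 → σ t = 1/100)
    (hσpos : ∀ t : ℝ, 1/4 < |t| → |t| < 1/2 → 0 < σ t)
    (k : ℕ) (hk : k = 1 ∨ k = 2)
    (γ : ℝ → E)
    (hγcont : ContinuousOn γ (Set.Ioo (-(2*ε)) (2*ε)))
    (hγm : ContDiffOn ℝ k γ (Set.Ioc (-(2*ε)) 0))
    (hγp : ContDiffOn ℝ k γ (Set.Ico 0 (2*ε)))
    (δ : ℝ) (hδ0 : 0 < δ) (hδε : δ ≤ ε)
 :
    ContDiffOn ℝ k (mollify φ σ δ γ) (Set.Ioo (-ε) ε) := by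
  classical
  have hδ1 : δ ≤ 1 := hδε.trans hε1
  -- facts about sigmaDel
  have hcsm : ContDiff ℝ (⊤ : ℕ∞) (sigmaDel σ δ) := by
    have : sigmaDel σ δ = fun t => δ ^ 2 * σ (t / δ) := rfl
    rw [this]
    exact contDiff_const.mul (hσsm.comp (contDiff_id.div_const δ))
  have hc0 : ∀ s, 0 ≤ sigmaDel σ δ s := fun s =>
    mul_nonneg (by positivity) (hσ0 _)
  have hcb : ∀ s, sigmaDel σ δ s ≤ δ ^ 2 / 100 := fun s => by
    have h := hσle (s / δ)
    have : sigmaDel σ δ s = δ ^ 2 * σ (s / δ) := rfl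
    rw [this]
    nlinarith [sq_nonneg δ]
  have hcpos : ∀ s : ℝ, |s| < δ / 2 → 0 < sigmaDel σ δ s := by
    intro s hs
    have h1 : |s / δ| < 1 / 2 := by
      rw [abs_div, abs_of_pos hδ0, div_lt_div_iff₀ hδ0 (by norm_num : (0:ℝ) < 2)]
      linarith
    have h2 : 0 < σ (s / δ) := by
      rcases le_or_gt |s / δ| (1 / 4) with h | h
      · rw [hσeq _ h]; norm_num
      · exact hσpos _ h h1
    have : sigmaDel σ δ s = δ ^ 2 * σ (s / δ) := rfl
    rw [this]
    positivity
  have hφz : ∀ t : ℝ, 1 < |t| → φ t = 0 := by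
    intro t ht
    by_contra h
    have h2 := hφsupp (Function.mem_support.2 h)
    rw [mem_Icc] at h2
    have := abs_le.2 h2
    linarith
  -- Inner region
  have hA : ContDiffOn ℝ k (mollify φ σ δ γ) (Ioo (-(δ/2)) (δ/2)) := by
    set γ' : ℝ → E := (Icc (-(3*ε/2)) (3*ε/2)).indicator γ with hγ'
    have hsub : Icc (-(3*ε/2)) (3*ε/2) ⊆ Ioo (-(2*ε)) (2*ε) := by
      apply Icc_subset_Ioo <;> nlinarith
    have hγ'int : Integrable γ' := by
      rw [hγ', integrable_indicator_iff measurableSet_Icc]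
      exact (hγcont.mono hsub).integrableOn_compact isCompact_Icc
    have hγ'loc : LocallyIntegrable γ' := hγ'int.locallyIntegrable
    set g : ℝ → ℝ → ℝ := fun p x => φ (x / sigmaDel σ δ p) / sigmaDel σ δ p with hgdef
    have hApos : ∀ p : ℝ, p ∈ Ioo (-(δ/2)) (δ/2) → 0 < sigmaDel σ δ p := by
      intro p hp
      exact hcpos p (abs_lt.2 ⟨hp.1, hp.2⟩)
    have hgs : ∀ p x, p ∈ Ioo (-(δ/2)) (δ/2) → x ∉ Icc (-1 : ℝ) 1 → g p x = 0 := by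
      intro p x hp hx
      have hcp : 0 < sigmaDel σ δ p := hApos p hp
      have h1 : 1 < |x| := by
        rw [mem_Icc, not_and_or] at hx
        rcases hx with h | h <;> push_neg at h
        · rw [abs_of_neg (by linarith)]; linarith
        · rw [abs_of_pos (by linarith)]; linarith
      have hle1 : sigmaDel σ δ p ≤ 1 := (hcb p).trans (by nlinarith)
      have h2 : 1 < |x / sigmaDel σ δ p| := by
        rw [abs_div, abs_of_pos hcp, lt_div_iff₀ hcp]
        calc 1 * sigmaDel σ δ p ≤ 1 := by rw [one_mul]; exact hle1
          _ < |x| := h1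
      rw [hgdef]
      simp [hφz _ h2]
    have hgsm : ContDiffOn ℝ k (Function.uncurry g) (Ioo (-(δ/2)) (δ/2) ×ˢ univ) := by
      have hcne : ∀ q : ℝ × ℝ, q ∈ Ioo (-(δ/2)) (δ/2) ×ˢ univ → sigmaDel σ δ q.1 ≠ 0 :=
        fun q hq => (hApos q.1 hq.1).ne'
      have h1 : ContDiffOn ℝ k (fun q : ℝ × ℝ => sigmaDel σ δ q.1)
          (Ioo (-(δ/2)) (δ/2) ×ˢ univ) :=
        ((hcsm.of_le (mod_cast le_top)).comp contDiff_fst).contDiffOn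
      have h2 : ContDiffOn ℝ k (fun q : ℝ × ℝ => q.2 / sigmaDel σ δ q.1)
          (Ioo (-(δ/2)) (δ/2) ×ˢ univ) :=
        contDiff_snd.contDiffOn.div h1 hcne
      exact ((hφsm.of_le (mod_cast le_top)).comp_contDiffOn h2).div h1 hcne
    have conv := contDiffOn_convolution_right_with_param
      ((ContinuousLinearMap.lsmul ℝ ℝ : ℝ →L[ℝ] E →L[ℝ] E).flip) isOpen_Ioo
      isCompact_Icc hgs hγ'loc hgsm
    have comp := conv.comp (ContDiff.prodMk contDiff_id contDiff_id).contDiffOn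
      (fun s hs => ⟨hs, mem_univ _⟩)
    refine comp.congr fun s hs => ?_
    have hcp : 0 < sigmaDel σ δ s := hApos s hs
    have hsb : |s| < δ / 2 := abs_lt.2 ⟨hs.1, hs.2⟩
    have key := integral_affine_smul φ γ' s (sigmaDel σ δ s) hcp
    have heq : ∀ t : ℝ, φ t • γ (s - sigmaDel σ δ s * t)
        = φ t • γ' (s - sigmaDel σ δ s * t) := by
      intro t
      rcases eq_or_ne (φ t) 0 with h | h
      · simp [h]
      · have ht : |t| ≤ 1 := by
          have := hφsupp (Function.mem_support.2 h)
          rw [mem_Icc] at this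
          exact abs_le.2 this
        have hb : |sigmaDel σ δ s * t| ≤ δ ^ 2 / 100 := by
          rw [abs_mul, abs_of_pos hcp]
          calc sigmaDel σ δ s * |t| ≤ sigmaDel σ δ s * 1 :=
                mul_le_mul_of_nonneg_left ht hcp.le
            _ ≤ δ ^ 2 / 100 := by rw [mul_one]; exact hcb s
        have hb' := abs_le.1 hb
        have hsb' := abs_lt.1 hsb
        have hmem : s - sigmaDel σ δ s * t ∈ Icc (-(3*ε/2)) (3*ε/2) := by
          rw [mem_Icc]
          constructor <;> nlinarith
        rw [hγ', indicator_of_mem hmem]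
    calc mollify φ σ δ γ s = ∫ t : ℝ, φ t • γ' (s - sigmaDel σ δ s * t) := by
          rw [mollify]
          congr 1
          funext t
          exact heq t
      _ = ∫ u : ℝ, (φ ((s - u) / sigmaDel σ δ s) / sigmaDel σ δ s) • γ' u := key.symm
      _ = ((γ' ⋆[(ContinuousLinearMap.lsmul ℝ ℝ : ℝ →L[ℝ] E →L[ℝ] E).flip, volume] g s) s : E) := by
          rw [convolution_def]
          congr 1
  -- Outer regions
  have hm32 : ∀ (p x : ℝ), |x| ≤ 3/2 → |sigmaDel σ δ p * x| ≤ 3 * δ / 200 := by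
    intro p x hx
    rw [abs_mul, abs_of_nonneg (hc0 p)]
    have h1 : sigmaDel σ δ p ≤ δ ^ 2 / 100 := hcb p
    nlinarith [hc0 p, abs_nonneg x]
  have hBp : ContDiffOn ℝ k (mollify φ σ δ γ) (Ioo (δ/5) ε) := by
    have := outer_aux φ hφsm hφsupp (sigmaDel σ δ) hcsm k γ (Ioo (δ/5) ε) (Ioo 0 (2*ε))
      isOpen_Ioo (hγp.mono Ioo_subset_Ico_self) ?_
    · exact this
    · intro p hp x hx
      have hb := abs_le.1 (hm32 p x hx)
      rw [mem_Ioo]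
      constructor <;> [nlinarith [hp.1]; nlinarith [hp.2]]
  have hBm : ContDiffOn ℝ k (mollify φ σ δ γ) (Ioo (-ε) (-(δ/5))) := by
    have := outer_aux φ hφsm hφsupp (sigmaDel σ δ) hcsm k γ (Ioo (-ε) (-(δ/5)))
      (Ioo (-(2*ε)) 0) isOpen_Ioo (hγm.mono Ioo_subset_Ioc_self) ?_
    · exact this
    · intro p hp x hx
      have hb := abs_le.1 (hm32 p x hx)
      rw [mem_Ioo]
      constructor <;> [nlinarith [hp.1]; nlinarith [hp.2]]
  -- Assemble
  apply contDiffOn_of_locally_contDiffOn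
  intro s hs
  rcases lt_or_ge |s| (δ/2) with h | h
  · have hsb := abs_lt.1 h
    exact ⟨Ioo (-(δ/2)) (δ/2), isOpen_Ioo, ⟨hsb.1, hsb.2⟩, hA.mono inter_subset_right⟩
  · rcases lt_or_ge 0 s with hpos | hneg
    · have h1 : δ/5 < s := by
        rw [abs_of_pos hpos] at h
        linarith
      exact ⟨Ioo (δ/5) ε, isOpen_Ioo, ⟨h1, hs.2⟩, hBp.mono inter_subset_right⟩
    · have hsneg : s < 0 := lt_of_le_of_ne hneg (by rintro rfl; rw [abs_zero] at h; linarith)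
      have h1 : s < -(δ/5) := by
        rw [abs_of_neg hsneg] at h
        linarith
      exact ⟨Ioo (-ε) (-(δ/5)), isOpen_Ioo, ⟨hs.1, h1⟩, hBm.mono inter_subset_right⟩
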